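/- Let N ≥ 3, 2 < p < 2 + 4/N < q < 2*, 2 < r ≤ 2*, and let A, B, C, D > 0. Define Φ(t) = (1/2)A t² − B t^{γ_p} − C t^{γ_q} − D t^{γ_r} for t ∈ (0,∞). If Φ(t₀) > 0 for some t₀ > 0, then Φ has exactly two critical points 0 < s < τ in (0,∞); moreover Φ''(s) > 0 and Φ''(τ) < 0, Φ(s) < 0 < Φ(τ), Φ(s) = min{Φ(t) : 0 < t ≤ τ}, and Φ(τ) = max{Φ(t) : t > 0}. -/

import Mathlib

open Real

/-- `γ_s = N(s-2)/2`. -/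
noncomputable def gam (N : ℕ) (s : ℝ) : ℝ := (N : ℝ) * (s - 2) / 2

/-- The critical Sobolev exponent `2* = 2N/(N-2)`. -/
noncomputable def twoStar (N : ℕ) : ℝ := 2 * (N : ℝ) / ((N : ℝ) - 2)

section Stmt5Aux

open Set Filter Topology

private lemma aux_term_anti₁ {K γ : ℝ} (hK : 0 < K) (hγ : γ < 0) :
    StrictAntiOn (fun t : ℝ => K * t ^ γ) (Ioi (0:ℝ)) := fun x hx _y _hy hxy =>
  mul_lt_mul_of_pos_left (Real.rpow_lt_rpow_of_neg hx hxy hγ) hK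

private lemma aux_term_anti₂ {K γ : ℝ} (hK : K < 0) (hγ : 0 < γ) :
    StrictAntiOn (fun t : ℝ => K * t ^ γ) (Ioi (0:ℝ)) := fun x hx _y _hy hxy =>
  mul_lt_mul_of_neg_left (Real.rpow_lt_rpow (le_of_lt hx) hxy hγ) hK

private lemma aux_psi_anti {K₁ K₂ K₃ γ₁ γ₂ γ₃ : ℝ} (h1K : 0 < K₁) (h1γ : γ₁ < 0)
    (h2K : K₂ < 0) (h2γ : 0 < γ₂) (h3 : K₃ * γ₃ < 0 ∨ K₃ = 0) :
    StrictAntiOn (fun t : ℝ => K₁ * t ^ γ₁ + K₂ * t ^ γ₂ + K₃ * t ^ γ₃)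
      (Ioi (0:ℝ)) := by
  intro x hx y hy hxy
  have h1 := aux_term_anti₁ h1K h1γ hx hy hxy
  have h2 := aux_term_anti₂ h2K h2γ hx hy hxy
  have h3' : K₃ * y ^ γ₃ ≤ K₃ * x ^ γ₃ := by
    rcases h3 with h3 | h3
    · rcases mul_neg_iff.mp h3 with ⟨hK, hγ⟩ | ⟨hK, hγ⟩
      · exact (aux_term_anti₁ hK hγ hx hy hxy).le
      · exact (aux_term_anti₂ hK hγ hx hy hxy).le
    · simp [h3]
  simp only at h1 h2 ⊢
  linarith

end Stmt5Aux

set_option maxHeartbeats 1000000 in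
theorem stmt_5 (N : ℕ) (hN : 3 ≤ N) (p q r A B C D : ℝ)
    (hp : 2 < p) (hpN : p < 2 + 4 / (N : ℝ)) (hNq : 2 + 4 / (N : ℝ) < q)
    (hq : q < twoStar N) (hr : 2 < r) (hr2 : r ≤ twoStar N)
    (hA : 0 < A) (hB : 0 < B) (hC : 0 < C) (hD : 0 < D)
    (Φ : ℝ → ℝ)
    (hΦ : Φ = fun t : ℝ => (1 / 2) * A * t ^ 2 - B * t ^ (gam N p)
      - C * t ^ (gam N q) - D * t ^ (gam N r))
    (t₀ : ℝ) (ht₀ : 0 < t₀) (hpos : 0 < Φ t₀) :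
    ∃ s τ : ℝ, 0 < s ∧ s < τ ∧
      (∀ t : ℝ, 0 < t → (deriv Φ t = 0 ↔ t = s ∨ t = τ)) ∧
      0 < deriv (deriv Φ) s ∧ deriv (deriv Φ) τ < 0 ∧
      Φ s < 0 ∧ 0 < Φ τ ∧
      (∀ t : ℝ, 0 < t → t ≤ τ → Φ s ≤ Φ t) ∧
      (∀ t : ℝ, 0 < t → Φ t ≤ Φ τ) := by
  open Set Filter Topology in
  subst hΦ
  set gp := gam N p with hgpdef
  set gq := gam N q with hgqdef
  set gr := gam N r with hgrdef
  have hNpos : (0:ℝ) < (N:ℝ) := by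
    have : (3:ℝ) ≤ (N:ℝ) := by exact_mod_cast hN
    linarith
  have hgp0 : 0 < gp := by
    rw [hgpdef, gam]
    have : 0 < (N:ℝ) * (p - 2) := mul_pos hNpos (by linarith)
    linarith
  have hgp2 : gp < 2 := by
    rw [hgpdef, gam]
    have h1 : p - 2 < 4 / (N:ℝ) := by linarith
    have h2 : (p - 2) * (N:ℝ) < 4 := (lt_div_iff₀ hNpos).mp h1
    nlinarith
  have hgq2 : 2 < gq := by
    rw [hgqdef, gam]
    have h1 : 4 / (N:ℝ) < q - 2 := by linarith
    have h2 : 4 < (q - 2) * (N:ℝ) := (div_lt_iff₀ hNpos).mp h1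
    nlinarith
  have hgr0 : 0 < gr := by
    rw [hgrdef, gam]
    have : 0 < (N:ℝ) * (r - 2) := mul_pos hNpos (by linarith)
    linarith
  -- the function h with Φ'(t) = t * h t on (0,∞), and its derivative h'
  set h : ℝ → ℝ := fun t => A - B * gp * t ^ (gp - 2) - C * gq * t ^ (gq - 2)
      - D * gr * t ^ (gr - 2) with hh
  set h' : ℝ → ℝ := fun t => -(B * gp * (gp - 2)) * t ^ (gp - 2 - 1)
      + -(C * gq * (gq - 2)) * t ^ (gq - 2 - 1)
      + -(D * gr * (gr - 2)) * t ^ (gr - 2 - 1) with hh'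
  -- derivative of Φ
  have hΦ' : ∀ t : ℝ, 0 < t → HasDerivAt
      (fun t : ℝ => (1 / 2) * A * t ^ 2 - B * t ^ gp - C * t ^ gq - D * t ^ gr)
      (t * h t) t := by
    intro t ht
    have dp : HasDerivAt (fun u : ℝ => u ^ gp) (gp * t ^ (gp - 1)) t :=
      Real.hasDerivAt_rpow_const (Or.inl ht.ne')
    have dq : HasDerivAt (fun u : ℝ => u ^ gq) (gq * t ^ (gq - 1)) t :=
      Real.hasDerivAt_rpow_const (Or.inl ht.ne')
    have dr : HasDerivAt (fun u : ℝ => u ^ gr) (gr * t ^ (gr - 1)) t :=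
      Real.hasDerivAt_rpow_const (Or.inl ht.ne')
    have dsq : HasDerivAt (fun u : ℝ => u ^ 2) ((2:ℕ) * t ^ 1) t := hasDerivAt_pow 2 t
    have big := (((dsq.const_mul ((1/2) * A)).sub (dp.const_mul B)).sub
      (dq.const_mul C)).sub (dr.const_mul D)
    refine big.congr_deriv ?_
    have e1 : ∀ x : ℝ, t ^ (x - 1) = t ^ (x - 2) * t := by
      intro x
      rw [show x - 1 = (x - 2) + 1 by ring, Real.rpow_add ht, Real.rpow_one]
    rw [hh]
    simp only [e1 gp, e1 gq, e1 gr]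
    push_cast
    ring
  -- derivative of h
  have hhd : ∀ t : ℝ, 0 < t → HasDerivAt h (h' t) t := by
    intro t ht
    have dp : HasDerivAt (fun u : ℝ => u ^ (gp - 2)) ((gp - 2) * t ^ (gp - 2 - 1)) t :=
      Real.hasDerivAt_rpow_const (Or.inl ht.ne')
    have dq : HasDerivAt (fun u : ℝ => u ^ (gq - 2)) ((gq - 2) * t ^ (gq - 2 - 1)) t :=
      Real.hasDerivAt_rpow_const (Or.inl ht.ne')
    have dr : HasDerivAt (fun u : ℝ => u ^ (gr - 2)) ((gr - 2) * t ^ (gr - 2 - 1)) t :=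
      Real.hasDerivAt_rpow_const (Or.inl ht.ne')
    have big := (((hasDerivAt_const t A).sub (dp.const_mul (B * gp))).sub
      (dq.const_mul (C * gq))).sub (dr.const_mul (D * gr))
    refine big.congr_deriv ?_
    rw [hh']
    ring
  -- pivot exponent
  obtain ⟨e, he1, he2, he3⟩ : ∃ e : ℝ, gp - 2 - e < 0 ∧ 0 < gq - 2 - e ∧
      ((-(D * gr * (gr - 2))) * (gr - 2 - e) < 0 ∨ -(D * gr * (gr - 2)) = 0) := by
    rcases lt_trichotomy (gr - 2) 0 with hc | hc | hc
    · refine ⟨0, by linarith, by linarith, Or.inl ?_⟩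
      have hDgr : 0 < D * gr := by positivity
      nlinarith [mul_pos hDgr (mul_pos_of_neg_of_neg hc hc)]
    · exact ⟨0, by linarith, by linarith, Or.inr (by rw [hc]; ring)⟩
    · refine ⟨min (gq - 2) (gr - 2) / 2, by
        have : 0 < min (gq - 2) (gr - 2) := lt_min (by linarith) hc
        linarith, ?_, Or.inl ?_⟩
      · have h1 : min (gq - 2) (gr - 2) / 2 < gq - 2 := by
          have h0 : 0 < min (gq - 2) (gr - 2) := lt_min (by linarith) hc
          have := min_le_left (gq - 2) (gr - 2)
          linarith
        linarith
      · have h1 : min (gq - 2) (gr - 2) / 2 < gr - 2 := by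
          have h0 : 0 < min (gq - 2) (gr - 2) := lt_min (by linarith) hc
          have := min_le_right (gq - 2) (gr - 2)
          linarith
        have hDgr : 0 < D * gr := by positivity
        apply mul_neg_of_neg_of_pos
        · nlinarith
        · linarith
  set ψ : ℝ → ℝ := fun t => -(B * gp * (gp - 2)) * t ^ (gp - 2 - e)
      + -(C * gq * (gq - 2)) * t ^ (gq - 2 - e)
      + -(D * gr * (gr - 2)) * t ^ (gr - 2 - e) with hψ
  have hlink : ∀ t : ℝ, 0 < t → h' t = t ^ (e - 1) * ψ t := by
    intro t ht
    have key : ∀ x : ℝ, t ^ (e - 1) * t ^ (x - e) = t ^ (x - 1) := by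
      intro x
      rw [← Real.rpow_add ht]
      congr 1
      ring
    have expand : t ^ (e - 1) * ψ t
        = -(B * gp * (gp - 2)) * (t ^ (e - 1) * t ^ (gp - 2 - e))
        + -(C * gq * (gq - 2)) * (t ^ (e - 1) * t ^ (gq - 2 - e))
        + -(D * gr * (gr - 2)) * (t ^ (e - 1) * t ^ (gr - 2 - e)) := by
      rw [hψ]; ring
    rw [expand, key (gp - 2), key (gq - 2), key (gr - 2), hh']
  have hψanti : StrictAntiOn ψ (Ioi (0:ℝ)) := by
    have hK1 : 0 < -(B * gp * (gp - 2)) := by nlinarith [mul_pos hB hgp0]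
    have hK2 : -(C * gq * (gq - 2)) < 0 := by
      nlinarith [mul_pos hC (show (0:ℝ) < gq by linarith)]
    rw [hψ]
    exact aux_psi_anti hK1 he1 hK2 he2 he3
  -- h' has at most one zero in (0,∞)
  have no_double : ∀ u v : ℝ, 0 < u → u < v → h' u = 0 → h' v = 0 → False := by
    intro u v hu huv hu0 hv0
    have hψu : ψ u = 0 := by
      have := hlink u hu
      rw [hu0] at this
      have hpow : (0:ℝ) < u ^ (e - 1) := Real.rpow_pos_of_pos hu _
      exact (mul_eq_zero.mp this.symm).resolve_left hpow.ne'
    have hψv : ψ v = 0 := by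
      have := hlink v (hu.trans huv)
      rw [hv0] at this
      have hpow : (0:ℝ) < v ^ (e - 1) := Real.rpow_pos_of_pos (hu.trans huv) _
      exact (mul_eq_zero.mp this.symm).resolve_left hpow.ne'
    have := hψanti (Set.mem_Ioi.mpr hu) (Set.mem_Ioi.mpr (hu.trans huv)) huv
    rw [hψu, hψv] at this
    exact lt_irrefl 0 this
  -- Rolle for h
  have rolle : ∀ x y : ℝ, 0 < x → x < y → h x = 0 → h y = 0 →
      ∃ u ∈ Ioo x y, h' u = 0 := by
    intro x y hx hxy hx0 hy0
    apply exists_hasDerivAt_eq_zero hxy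
    · intro u hu
      exact ((hhd u (lt_of_lt_of_le hx hu.1)).continuousAt).continuousWithinAt
    · rw [hx0, hy0]
    · intro u hu
      exact hhd u (hx.trans hu.1)
  have at_most_two : ∀ x y z : ℝ, 0 < x → x < y → y < z →
      h x = 0 → h y = 0 → h z = 0 → False := by
    intro x y z hx hxy hyz hx0 hy0 hz0
    obtain ⟨u, huI, hu0⟩ := rolle x y hx hxy hx0 hy0
    obtain ⟨v, hvI, hv0⟩ := rolle y z (hx.trans hxy) hyz hy0 hz0
    exact no_double u v (hx.trans huI.1) (huI.2.trans hvI.1) hu0 hv0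
  -- Φ at 0
  have hΦ0 : (1 / 2) * A * (0:ℝ) ^ 2 - B * (0:ℝ) ^ gp - C * (0:ℝ) ^ gq
      - D * (0:ℝ) ^ gr = 0 := by
    rw [Real.zero_rpow hgp0.ne', Real.zero_rpow (by linarith : gq ≠ 0),
      Real.zero_rpow hgr0.ne']
    norm_num
  -- continuity of Φ on Ici 0
  have contΦ : ContinuousOn
      (fun t : ℝ => (1 / 2) * A * t ^ 2 - B * t ^ gp - C * t ^ gq - D * t ^ gr)
      (Ici (0:ℝ)) := by
    have crp : ∀ γ : ℝ, 0 < γ → ContinuousOn (fun t : ℝ => t ^ γ) (Ici (0:ℝ)) := by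
      intro γ hγ x _
      exact (Real.continuousAt_rpow_const x γ (Or.inr hγ.le)).continuousWithinAt
    exact (((continuousOn_const.mul (continuous_pow 2).continuousOn).sub
      (continuousOn_const.mul (crp gp hgp0))).sub
      (continuousOn_const.mul (crp gq (by linarith)))).sub
      (continuousOn_const.mul (crp gr hgr0))
  -- Φ is negative for large t
  set T2 : ℝ := (A / C) ^ (gq - 2)⁻¹ with hT2
  have hT2pos : 0 < T2 := Real.rpow_pos_of_pos (div_pos hA hC) _
  have hbig : ∀ t : ℝ, T2 ≤ t →
      (1 / 2) * A * t ^ 2 - B * t ^ gp - C * t ^ gq - D * t ^ gr < 0 := by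
    intro t htT2
    have ht : 0 < t := hT2pos.trans_le htT2
    have h1 : A / C ≤ t ^ (gq - 2) := by
      calc A / C = ((A / C) ^ (gq - 2)⁻¹) ^ (gq - 2) :=
            (Real.rpow_inv_rpow (div_pos hA hC).le (by linarith)).symm
        _ ≤ t ^ (gq - 2) := Real.rpow_le_rpow hT2pos.le htT2 (by linarith)
    have h2 : A ≤ t ^ (gq - 2) * C := (div_le_iff₀ hC).mp h1
    have h3 : t ^ gq = t ^ (gq - 2) * t ^ 2 := by
      rw [← Real.rpow_two, ← Real.rpow_add ht]
      congr 1
      ring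
    have h4 : A * t ^ 2 ≤ C * t ^ gq := by
      rw [h3]
      have := mul_le_mul_of_nonneg_right h2 (sq_nonneg t)
      nlinarith [this]
    have h5 : 0 ≤ B * t ^ gp := by positivity
    have h6 : 0 ≤ D * t ^ gr := by positivity
    have h7 : 0 < A * t ^ 2 := by positivity
    linarith
  -- the maximizer τ
  set T : ℝ := max T2 t₀ with hT
  have hTpos : 0 < T := lt_max_of_lt_left hT2pos
  obtain ⟨τ, hτmem, hτmax'⟩ := (isCompact_Icc (a := (0:ℝ)) (b := T)).exists_isMaxOn
    ⟨0, Set.left_mem_Icc.mpr hTpos.le⟩ (contΦ.mono (fun x hx => hx.1))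
  have hτmax := isMaxOn_iff.mp hτmax'
  have hΦτ : 0 < (1 / 2) * A * τ ^ 2 - B * τ ^ gp - C * τ ^ gq - D * τ ^ gr := by
    have := hτmax t₀ ⟨ht₀.le, le_max_right _ _⟩
    simp only at this hpos ⊢
    linarith
  have hτpos : 0 < τ := by
    rcases lt_or_eq_of_le hτmem.1 with h | h
    · exact h
    · exfalso
      rw [← h] at hΦτ
      rw [hΦ0] at hΦτ
      exact lt_irrefl 0 hΦτ
  have hτltT : τ < T := by
    rcases lt_or_eq_of_le hτmem.2 with h | h
    · exact h
    · exfalso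
      have := hbig T (le_max_left _ _)
      rw [h] at hΦτ
      linarith
  have hglobalmax : ∀ t : ℝ, 0 < t →
      (1 / 2) * A * t ^ 2 - B * t ^ gp - C * t ^ gq - D * t ^ gr
      ≤ (1 / 2) * A * τ ^ 2 - B * τ ^ gp - C * τ ^ gq - D * τ ^ gr := by
    intro t ht
    rcases le_or_gt t T with h | h
    · exact hτmax t ⟨ht.le, h⟩
    · have := hbig t ((le_max_left _ _).trans h.le)
      linarith
  have hderivτ : deriv (fun t : ℝ => (1 / 2) * A * t ^ 2 - B * t ^ gp
      - C * t ^ gq - D * t ^ gr) τ = 0 := by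
    apply IsLocalMax.deriv_eq_zero
    exact hτmax'.isLocalMax (Icc_mem_nhds hτpos hτltT)
  have hhτ : h τ = 0 := by
    have hd := (hΦ' τ hτpos).deriv
    rw [hderivτ] at hd
    exact (mul_eq_zero.mp hd.symm).resolve_left hτpos.ne'
  -- the minimizer s on [0, τ]
  obtain ⟨s, hsmem, hsmin'⟩ := (isCompact_Icc (a := (0:ℝ)) (b := τ)).exists_isMinOn
    ⟨0, Set.left_mem_Icc.mpr hτpos.le⟩ (contΦ.mono (fun x hx => hx.1))
  have hsmin := isMinOn_iff.mp hsmin'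
  -- Φ is negative somewhere in (0, τ)
  set t₁ : ℝ := min (τ / 2) ((B / A) ^ (2 - gp)⁻¹) with ht₁def
  have ht₁pos : 0 < t₁ :=
    lt_min (by linarith) (Real.rpow_pos_of_pos (div_pos hB hA) _)
  have hΦt₁ : (1 / 2) * A * t₁ ^ 2 - B * t₁ ^ gp - C * t₁ ^ gq - D * t₁ ^ gr < 0 := by
    have h2gp : 0 < 2 - gp := by linarith
    have h1 : t₁ ^ (2 - gp) ≤ B / A := by
      calc t₁ ^ (2 - gp) ≤ ((B / A) ^ (2 - gp)⁻¹) ^ (2 - gp) :=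
            Real.rpow_le_rpow ht₁pos.le (min_le_right _ _) h2gp.le
        _ = B / A := Real.rpow_inv_rpow (div_pos hB hA).le h2gp.ne'
    have h2 : t₁ ^ (2 - gp) * A ≤ B := (le_div_iff₀ hA).mp h1
    have h3 : (t₁:ℝ) ^ 2 = t₁ ^ (2 - gp) * t₁ ^ gp := by
      rw [← Real.rpow_two, ← Real.rpow_add ht₁pos]
      congr 1
      ring
    have h4 : A * t₁ ^ 2 ≤ B * t₁ ^ gp := by
      rw [h3]
      have hgpn : (0:ℝ) ≤ t₁ ^ gp := Real.rpow_nonneg ht₁pos.le _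
      nlinarith [mul_le_mul_of_nonneg_right h2 hgpn]
    have h5 : 0 < B * t₁ ^ gp := by positivity
    have h6 : 0 < C * t₁ ^ gq := by positivity
    have h7 : 0 < D * t₁ ^ gr := by positivity
    linarith
  have hΦs : (1 / 2) * A * s ^ 2 - B * s ^ gp - C * s ^ gq - D * s ^ gr < 0 := by
    have := hsmin t₁ ⟨ht₁pos.le, by
      have := min_le_left (τ / 2) ((B / A) ^ (2 - gp)⁻¹)
      linarith⟩
    linarith
  have hspos : 0 < s := by
    rcases lt_or_eq_of_le hsmem.1 with hlt | heq
    · exact hlt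
    · exfalso
      rw [← heq] at hΦs
      rw [hΦ0] at hΦs
      exact lt_irrefl 0 hΦs
  have hsτ : s < τ := by
    rcases lt_or_eq_of_le hsmem.2 with hlt | heq
    · exact hlt
    · exfalso
      rw [heq] at hΦs
      linarith
  have hderivs : deriv (fun t : ℝ => (1 / 2) * A * t ^ 2 - B * t ^ gp
      - C * t ^ gq - D * t ^ gr) s = 0 := by
    apply IsLocalMin.deriv_eq_zero
    exact hsmin'.isLocalMin (Icc_mem_nhds hspos hsτ)
  have hhs : h s = 0 := by
    have hd := (hΦ' s hspos).deriv
    rw [hderivs] at hd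
    exact (mul_eq_zero.mp hd.symm).resolve_left hspos.ne'
  -- Rolle point between s and τ
  obtain ⟨u, huI, hu0⟩ := rolle s τ hspos hsτ hhs hhτ
  have hupos : 0 < u := hspos.trans huI.1
  have hψu : ψ u = 0 := by
    have := hlink u hupos
    rw [hu0] at this
    have hpow : (0:ℝ) < u ^ (e - 1) := Real.rpow_pos_of_pos hupos _
    exact (mul_eq_zero.mp this.symm).resolve_left hpow.ne'
  have hψs : 0 < ψ s := by
    have := hψanti (Set.mem_Ioi.mpr hspos) (Set.mem_Ioi.mpr hupos) huI.1
    rw [hψu] at this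
    exact this
  have hψτ : ψ τ < 0 := by
    have := hψanti (Set.mem_Ioi.mpr hupos) (Set.mem_Ioi.mpr hτpos) huI.2
    rw [hψu] at this
    exact this
  have hh's : 0 < h' s := by
    rw [hlink s hspos]
    exact mul_pos (Real.rpow_pos_of_pos hspos _) hψs
  have hh'τ : h' τ < 0 := by
    rw [hlink τ hτpos]
    exact mul_neg_of_pos_of_neg (Real.rpow_pos_of_pos hτpos _) hψτ
  -- second derivative values
  have hsecond : ∀ t : ℝ, 0 < t → h t = 0 →
      deriv (deriv (fun t : ℝ => (1 / 2) * A * t ^ 2 - B * t ^ gp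
        - C * t ^ gq - D * t ^ gr)) t = t * h' t := by
    intro t ht hht
    have hev : (deriv (fun t : ℝ => (1 / 2) * A * t ^ 2 - B * t ^ gp
        - C * t ^ gq - D * t ^ gr)) =ᶠ[𝓝 t] (fun u => u * h u) := by
      filter_upwards [isOpen_Ioi.mem_nhds (Set.mem_Ioi.mpr ht)] with x hx
      exact (hΦ' x hx).deriv
    rw [hev.deriv_eq]
    have hd : HasDerivAt (fun u : ℝ => u * h u) (1 * h t + t * h' t) t :=
      (hasDerivAt_id t).mul (hhd t ht)
    rw [hd.deriv, hht]
    ring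
  -- uniqueness of critical points
  have hcrit : ∀ t : ℝ, 0 < t →
      (deriv (fun t : ℝ => (1 / 2) * A * t ^ 2 - B * t ^ gp
        - C * t ^ gq - D * t ^ gr) t = 0 ↔ t = s ∨ t = τ) := by
    intro t ht
    constructor
    · intro hd0
      have hd := (hΦ' t ht).deriv
      rw [hd0] at hd
      have hht : h t = 0 := (mul_eq_zero.mp hd.symm).resolve_left ht.ne'
      by_contra hcon
      push_neg at hcon
      obtain ⟨hts, htτ⟩ := hcon
      rcases lt_trichotomy t s with h1 | h1 | h1
      · exact at_most_two t s τ ht h1 hsτ hht hhs hhτ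
      · exact hts h1
      · rcases lt_trichotomy t τ with h2 | h2 | h2
        · exact at_most_two s t τ hspos h1 h2 hhs hht hhτ
        · exact htτ h2
        · exact at_most_two s τ t hspos hsτ h2 hhs hhτ hht
    · rintro (rfl | rfl)
      · rw [(hΦ' t ht).deriv, hhs, mul_zero]
      · rw [(hΦ' t ht).deriv, hhτ, mul_zero]
  refine ⟨s, τ, hspos, hsτ, hcrit, ?_, ?_, hΦs, hΦτ, ?_, ?_⟩
  · rw [hsecond s hspos hhs]
    exact mul_pos hspos hh's
  · rw [hsecond τ hτpos hhτ]
    exact mul_neg_of_pos_of_neg hτpos hh'τ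
  · intro t ht htτ
    exact hsmin t ⟨ht.le, htτ⟩
  · exact hglobalmax
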